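/- Assume c is Lipschitz in x uniformly in a, c(x,A) is convex for every x, B̄(0,c₀) ⊆ c(x,A) for all x for some c₀ > 0, and c(·,a) is ℤ^N-periodic in x. Let T > 0, m ∈ L¹((0,T)×T^N) and w ∈ L¹((0,T)×T^N; ℝ^N), and set Σ := sup { ∫₀^T∫_{T^N} (−b(t,x)·w(t,x) − H(x,b(t,x)) m(t,x)) dx dt : b : [0,T]×T^N → ℝ^N continuous }. If m ≥ 0 almost everywhere and w(t,x) ∈ m(t,x)·c(x,A) almost everywhere, then Σ = 0; otherwise Σ = +∞. -/

import Mathlib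

open MeasureTheory RealInnerProductSpace Metric

open Pointwise

set_option linter.unusedSectionVars false
set_option maxHeartbeats 1000000


section Aux
variable {N : ℕ} {A : Type*} [TopologicalSpace A] [CompactSpace A] [Nonempty A]
variable {c : EuclideanSpace ℝ (Fin N) → A → EuclideanSpace ℝ (Fin N)}

lemma aux_contc (hc : Continuous fun q : EuclideanSpace ℝ (Fin N) × A => c q.1 q.2)
    (x : EuclideanSpace ℝ (Fin N)) : Continuous (c x) :=
  hc.comp (Continuous.prodMk_right x)

lemma aux_bdd (hc : Continuous fun q : EuclideanSpace ℝ (Fin N) × A => c q.1 q.2)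
    (x p : EuclideanSpace ℝ (Fin N)) :
    BddAbove (Set.range fun a : A => -⟪c x a, p⟫) :=
  (isCompact_range (((aux_contc hc x).inner continuous_const).neg)).bddAbove

lemma aux_le (hc : Continuous fun q : EuclideanSpace ℝ (Fin N) × A => c q.1 q.2)
    (x p : EuclideanSpace ℝ (Fin N)) (a : A) :
    -⟪c x a, p⟫ ≤ ⨆ a : A, -⟪c x a, p⟫ :=
  le_ciSup (aux_bdd hc x p) a

lemma aux_H0 (x : EuclideanSpace ℝ (Fin N)) :
    (⨆ a : A, -⟪c x a, (0 : EuclideanSpace ℝ (Fin N))⟫) = 0 := by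
  simp [inner_zero_right]

lemma aux_hom (x p : EuclideanSpace ℝ (Fin N)) {s : ℝ} (hs : 0 ≤ s) :
    (⨆ a : A, -⟪c x a, s • p⟫) = s * ⨆ a : A, -⟪c x a, p⟫ := by
  rw [Real.mul_iSup_of_nonneg hs]
  congr 1; ext a
  rw [real_inner_smul_right]; ring

lemma aux_lb (hc : Continuous fun q : EuclideanSpace ℝ (Fin N) × A => c q.1 q.2)
    {c₀ : ℝ} (hc₀ : 0 < c₀)
    (hball : ∀ x, closedBall (0 : EuclideanSpace ℝ (Fin N)) c₀ ⊆ Set.range (c x))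
    (x p : EuclideanSpace ℝ (Fin N)) :
    c₀ * ‖p‖ ≤ ⨆ a : A, -⟪c x a, p⟫ := by
  rcases eq_or_ne p 0 with rfl | hp
  · simpa using (aux_H0 (c := c) x).symm.le
  · have hpn : (0:ℝ) < ‖p‖ := norm_pos_iff.2 hp
    have hmem : (-(c₀ / ‖p‖)) • p ∈ closedBall (0 : EuclideanSpace ℝ (Fin N)) c₀ := by
      simp only [mem_closedBall, dist_zero_right, norm_smul, norm_neg]
      rw [Real.norm_eq_abs, abs_of_nonneg (by positivity : (0:ℝ) ≤ c₀ / ‖p‖)]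
      rw [div_mul_cancel₀ _ hpn.ne']
    obtain ⟨a, ha⟩ := hball x hmem
    have : -⟪c x a, p⟫ = c₀ * ‖p‖ := by
      rw [ha, real_inner_smul_left, real_inner_self_eq_norm_sq]
      field_simp
    calc c₀ * ‖p‖ = -⟪c x a, p⟫ := this.symm
      _ ≤ _ := aux_le hc x p a

end Aux

section Aux2
variable {N : ℕ} {A : Type*} [TopologicalSpace A] [CompactSpace A] [Nonempty A]
variable {c : EuclideanSpace ℝ (Fin N) → A → EuclideanSpace ℝ (Fin N)}

lemma aux_lipx (hc : Continuous fun q : EuclideanSpace ℝ (Fin N) × A => c q.1 q.2)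
    {Lc : NNReal} (hcLip : ∀ a : A, LipschitzWith Lc (fun x => c x a))
    (p x y : EuclideanSpace ℝ (Fin N)) :
    (⨆ a : A, -⟪c x a, p⟫) ≤ (⨆ a : A, -⟪c y a, p⟫) + Lc * dist x y * ‖p‖ := by
  refine ciSup_le fun a => ?_
  have h1 : -⟪c x a, p⟫ = -⟪c y a, p⟫ + ⟪c y a - c x a, p⟫ := by
    rw [inner_sub_left]; ring
  have h2 : ⟪c y a - c x a, p⟫ ≤ ‖c y a - c x a‖ * ‖p‖ := real_inner_le_norm _ _
  have h3 : ‖c y a - c x a‖ ≤ Lc * dist x y := by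
    rw [← dist_eq_norm, dist_comm]
    exact (hcLip a).dist_le_mul x y
  have h4 := aux_le hc y p a
  nlinarith [norm_nonneg p]

lemma aux_contHx (hc : Continuous fun q : EuclideanSpace ℝ (Fin N) × A => c q.1 q.2)
    {Lc : NNReal} (hcLip : ∀ a : A, LipschitzWith Lc (fun x => c x a))
    (p : EuclideanSpace ℝ (Fin N)) :
    Continuous fun x : EuclideanSpace ℝ (Fin N) => ⨆ a : A, -⟪c x a, p⟫ := by
  refine (LipschitzWith.of_dist_le_mul (K := (Lc * ‖p‖).toNNReal) fun x y => ?_).continuous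
  rw [Real.dist_eq, abs_le]
  have h1 := aux_lipx hc hcLip p x y
  have h2 := aux_lipx hc hcLip p y x
  rw [dist_comm y x] at h2
  have : ((Lc * ‖p‖).toNNReal : ℝ) = Lc * ‖p‖ := by
    rw [Real.coe_toNNReal]; positivity
  rw [this]
  constructor <;> nlinarith [dist_nonneg (x := x) (y := y)]

lemma aux_lipp (hc : Continuous fun q : EuclideanSpace ℝ (Fin N) × A => c q.1 q.2)
    (x : EuclideanSpace ℝ (Fin N)) :
    Continuous fun p : EuclideanSpace ℝ (Fin N) => ⨆ a : A, -⟪c x a, p⟫ := by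
  obtain ⟨M, hM⟩ := (isCompact_range (aux_contc hc x)).isBounded.exists_norm_le
  have hM' : ∀ a : A, ‖c x a‖ ≤ M := fun a => hM _ (Set.mem_range_self a)
  have key : ∀ p q : EuclideanSpace ℝ (Fin N),
      (⨆ a : A, -⟪c x a, p⟫) ≤ (⨆ a : A, -⟪c x a, q⟫) + M * dist p q := by
    intro p q
    refine ciSup_le fun a => ?_
    have h1 : -⟪c x a, p⟫ = -⟪c x a, q⟫ + ⟪c x a, q - p⟫ := by
      rw [inner_sub_right]; ring
    have h2 : ⟪c x a, q - p⟫ ≤ ‖c x a‖ * ‖q - p‖ := real_inner_le_norm _ _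
    have h4 := aux_le hc x q a
    have h5 : ‖q - p‖ = dist p q := by rw [dist_comm, dist_eq_norm]
    have h6 := mul_le_mul_of_nonneg_right (hM' a) (norm_nonneg (q - p))
    rw [← h5]
    linarith [h2, h4, h1, h6]
  have hM0 : 0 ≤ M := (norm_nonneg (c x (Classical.arbitrary A))).trans (hM' _)
  refine (LipschitzWith.of_dist_le_mul (K := M.toNNReal) fun p q => ?_).continuous
  rw [Real.dist_eq, abs_le, Real.coe_toNNReal _ hM0]
  have h1 := key p q
  have h2 := key q p
  rw [dist_comm q p] at h2
  constructor <;> nlinarith [dist_nonneg (x := p) (y := q)]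

end Aux2

section Aux3
variable {N : ℕ} {A : Type*} [TopologicalSpace A] [CompactSpace A] [Nonempty A]
variable {c : EuclideanSpace ℝ (Fin N) → A → EuclideanSpace ℝ (Fin N)}

lemma aux_good (hN : 1 ≤ N)
    (hc : Continuous fun q : EuclideanSpace ℝ (Fin N) × A => c q.1 q.2)
    (hconv : ∀ x, Convex ℝ (Set.range (c x)))
    {c₀ : ℝ} (hc₀ : 0 < c₀)
    (hball : ∀ x, closedBall (0 : EuclideanSpace ℝ (Fin N)) c₀ ⊆ Set.range (c x))
    (x : EuclideanSpace ℝ (Fin N)) (mv : ℝ) (wv : EuclideanSpace ℝ (Fin N))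
    (hall : ∀ p : EuclideanSpace ℝ (Fin N), 0 ≤ ⟪p, wv⟫ + (⨆ a : A, -⟪c x a, p⟫) * mv) :
    0 ≤ mv ∧ ∃ a : A, wv = mv • c x a := by
  have hlb : ∀ p : EuclideanSpace ℝ (Fin N), c₀ * ‖p‖ ≤ ⨆ a : A, -⟪c x a, p⟫ :=
    aux_lb hc hc₀ hball x
  have hm : 0 ≤ mv := by
    by_contra hm
    push_neg at hm
    rcases eq_or_ne wv 0 with rfl | hw
    · have hp := hall (EuclideanSpace.single (⟨0, hN⟩ : Fin N) (1:ℝ))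
      rw [inner_zero_right] at hp
      have h1 := hlb (EuclideanSpace.single (⟨0, hN⟩ : Fin N) (1:ℝ))
      have hn : ‖EuclideanSpace.single (⟨0, hN⟩ : Fin N) (1:ℝ)‖ = 1 := by
        rw [EuclideanSpace.norm_single]; norm_num
      rw [hn, mul_one] at h1
      have h3 := mul_neg_of_pos_of_neg (lt_of_lt_of_le hc₀ h1) hm
      linarith
    · have hp := hall (-wv)
      have h1 := hlb (-wv)
      rw [norm_neg] at h1
      rw [inner_neg_left, real_inner_self_eq_norm_sq] at hp
      have hwn : (0:ℝ) < ‖wv‖ := norm_pos_iff.2 hw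
      have h2 : (0:ℝ) < c₀ * ‖wv‖ := by positivity
      have h3 := mul_neg_of_pos_of_neg (lt_of_lt_of_le h2 h1) hm
      nlinarith
  refine ⟨hm, ?_⟩
  by_contra hw
  have hw' : wv ∉ Set.range fun a : A => mv • c x a := by
    rintro ⟨a, ha⟩
    exact hw ⟨a, ha.symm⟩
  have hKc : IsCompact (Set.range fun a : A => mv • c x a) :=
    isCompact_range ((aux_contc hc x).const_smul mv)
  have hKconv : Convex ℝ (Set.range fun a : A => mv • c x a) := by
    have h : (Set.range fun a : A => mv • c x a) = mv • Set.range (c x) := by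
      rw [Set.smul_set_range]
    rw [h]
    exact (hconv x).smul mv
  obtain ⟨f, u, hfw, hfk⟩ :=
    geometric_hahn_banach_point_closed hKconv hKc.isClosed hw'
  obtain ⟨z, hz⟩ := (InnerProductSpace.toDual ℝ (EuclideanSpace ℝ (Fin N))).surjective f
  have hzval : ∀ y, f y = ⟪z, y⟫ := fun y => by rw [← hz]; rfl
  have hp := hall z
  have hbound : (⨆ a : A, -⟪c x a, z⟫) * mv ≤ -u := by
    rw [Real.iSup_mul_of_nonneg hm]
    refine ciSup_le fun a => ?_
    have h1 := hfk _ (Set.mem_range_self a)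
    rw [hzval, real_inner_smul_right] at h1
    have h2 : -⟪c x a, z⟫ * mv = -(⟪z, c x a⟫ * mv) := by
      rw [real_inner_comm]; ring
    rw [h2]
    linarith
  rw [hzval] at hfw
  linarith

end Aux3


-- key fract estimate: if fract x₀ is near the boundary and |x - x₀| is small, fract x is near the boundary
lemma fract_near {ρ : ℝ} (hρ : 0 < ρ) (hρ1 : ρ < 1) {s t : ℝ}
    (hs : Int.fract s < ρ/4 ∨ 1 - ρ/4 < Int.fract s) (hst : |t - s| < ρ/4) :
    Int.fract t ≤ ρ/2 ∨ 1 - ρ/2 ≤ Int.fract t := by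
  have hf0 := Int.fract_nonneg s
  have hf1 := Int.fract_lt_one s
  have hfloor : s = ⌊s⌋ + Int.fract s := by rw [Int.fract]; ring
  rcases hs with hs | hs
  · -- s close to ⌊s⌋ from above
    rcases le_or_gt (⌊s⌋ : ℝ) t with ht | ht
    · -- t ∈ [⌊s⌋, ⌊s⌋ + ρ/2): fract t = t - ⌊s⌋
      have htlt : t < ⌊s⌋ + 1 := by
        have : t - s < ρ/4 := (abs_lt.1 hst).2
        nlinarith [Int.fract_nonneg s]
      have : ⌊t⌋ = ⌊s⌋ := by
        rw [Int.floor_eq_iff]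
        constructor
        · exact_mod_cast ht
        · exact_mod_cast htlt
      left
      have : Int.fract t = t - ⌊s⌋ := by rw [Int.fract, this]
      rw [this]
      have h2 : t - s < ρ/4 := (abs_lt.1 hst).2
      nlinarith
    · -- t < ⌊s⌋ : fract t = t - (⌊s⌋ - 1) ∈ (1 - ρ/2, 1)
      have htgt : (⌊s⌋ : ℝ) - 1 ≤ t := by
        have : s - t < ρ/4 := by have := (abs_lt.1 hst).1; linarith
        nlinarith
      have hfl : ⌊t⌋ = ⌊s⌋ - 1 := by
        rw [Int.floor_eq_iff]
        push_cast
        exact ⟨htgt, by linarith⟩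
      right
      have : Int.fract t = t - ((⌊s⌋ : ℝ) - 1) := by
        rw [Int.fract, hfl]; push_cast; ring
      rw [this]
      have h1 : s - t < ρ/4 := by have := (abs_lt.1 hst).1; linarith
      nlinarith
  · -- s close to ⌊s⌋ + 1 from below
    rcases lt_or_ge t ((⌊s⌋ : ℝ) + 1) with ht | ht
    · right
      have htgt : (⌊s⌋ : ℝ) ≤ t := by
        have : s - t < ρ/4 := by have := (abs_lt.1 hst).1; linarith
        nlinarith
      have hfl : ⌊t⌋ = ⌊s⌋ := by
        rw [Int.floor_eq_iff]
        exact ⟨by exact_mod_cast htgt, by exact_mod_cast ht⟩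
      have : Int.fract t = t - (⌊s⌋ : ℝ) := by rw [Int.fract, hfl]
      rw [this]
      have h1 : s - t < ρ/4 := by have := (abs_lt.1 hst).1; linarith
      nlinarith
    · left
      have htlt : t < (⌊s⌋ : ℝ) + 1 + ρ/4 := by
        have : t - s < ρ/4 := (abs_lt.1 hst).2
        nlinarith [Int.fract_lt_one s]
      have hfl : ⌊t⌋ = ⌊s⌋ + 1 := by
        rw [Int.floor_eq_iff]
        push_cast
        exact ⟨ht, by linarith⟩
      have : Int.fract t = t - ((⌊s⌋ : ℝ) + 1) := by
        rw [Int.fract, hfl]; push_cast; ring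
      rw [this]
      nlinarith

lemma continuous_periodize {N : ℕ} {φ : ℝ × EuclideanSpace ℝ (Fin N) → ℝ}
    (hφ : Continuous φ) {ρ : ℝ} (hρ : 0 < ρ) (hρ1 : ρ < 1)
    (hvan : ∀ (t : ℝ) (y : EuclideanSpace ℝ (Fin N)),
      (∃ i, y i ≤ ρ/2 ∨ 1 - ρ/2 ≤ y i) → φ (t, y) = 0) :
    Continuous fun q : ℝ × EuclideanSpace ℝ (Fin N) =>
      φ (q.1, (WithLp.toLp 2 (fun i => Int.fract (q.2 i)) : EuclideanSpace ℝ (Fin N))) := by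
  rw [continuous_iff_continuousAt]
  rintro ⟨t₀, x₀⟩
  by_cases hA : ∀ i, ρ/4 ≤ Int.fract (x₀ i) ∧ Int.fract (x₀ i) ≤ 1 - ρ/4
  · -- all coordinates away from the boundary: fract is continuous at each coordinate
    have hfr : ∀ i, ContinuousAt Int.fract (x₀ i) := by
      intro i
      apply continuousAt_fract
      intro h
      have h2 : Int.fract (x₀ i) = 0 := by
        rw [Int.fract, h]; simp
      have := (hA i).1
      linarith
    have hF : ContinuousAt
        (fun x : EuclideanSpace ℝ (Fin N) =>
          (WithLp.toLp 2 (fun i => Int.fract (x i)) : EuclideanSpace ℝ (Fin N))) x₀ := by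
      refine (PiLp.continuous_toLp 2 _).continuousAt.comp (continuousAt_pi.2 ?_)
      intro i
      exact ContinuousAt.comp (f := fun y : EuclideanSpace ℝ (Fin N) => y i) (hfr i) (PiLp.continuous_apply 2 _ i).continuousAt
    exact hφ.continuousAt.comp (continuousAt_fst.prodMk (ContinuousAt.comp (g := fun x : EuclideanSpace ℝ (Fin N) =>
      (WithLp.toLp 2 (fun i => Int.fract (x i)) : EuclideanSpace ℝ (Fin N))) (f := Prod.snd) hF continuousAt_snd))
  · -- some coordinate is near the boundary: the function vanishes in a neighborhood
    push_neg at hA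
    obtain ⟨i, hi⟩ := hA
    have hi' : Int.fract (x₀ i) < ρ/4 ∨ 1 - ρ/4 < Int.fract (x₀ i) := by
      by_cases h : ρ/4 ≤ Int.fract (x₀ i)
      · right; exact hi h
      · left; linarith [not_le.1 h]
    have hvanish : ∀ q : ℝ × EuclideanSpace ℝ (Fin N), |q.2 i - x₀ i| < ρ/4 →
        φ (q.1, (WithLp.toLp 2 (fun j => Int.fract (q.2 j)) : EuclideanSpace ℝ (Fin N))) = 0 := by
      intro q hq
      exact hvan _ _ ⟨i, fract_near hρ hρ1 hi' hq⟩
    have hopen : IsOpen {q : ℝ × EuclideanSpace ℝ (Fin N) | |q.2 i - x₀ i| < ρ/4} := by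
      have hc : Continuous fun q : ℝ × EuclideanSpace ℝ (Fin N) => |q.2 i - x₀ i| :=
        (((PiLp.continuous_apply 2 _ i).comp continuous_snd).sub continuous_const).abs
      exact isOpen_lt hc continuous_const
    have hmem : (t₀, x₀) ∈ {q : ℝ × EuclideanSpace ℝ (Fin N) | |q.2 i - x₀ i| < ρ/4} := by
      simp only [Set.mem_setOf_eq, sub_self, abs_zero]; linarith
    have hev : ∀ᶠ q in nhds (t₀, x₀),
        φ (q.1, (WithLp.toLp 2 (fun j => Int.fract (q.2 j)) : EuclideanSpace ℝ (Fin N))) = (0:ℝ) :=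
      Filter.eventually_of_mem (hopen.mem_nhds hmem) hvanish
    exact continuousAt_const.congr (hev.mono fun q hq => hq.symm)


-- volume on ℝ × ℝ^N is a regular measure
lemma aux_regular {N : ℕ} :
    (volume : Measure (ℝ × EuclideanSpace ℝ (Fin N))).Regular := by
  haveI : (volume : Measure (ℝ × EuclideanSpace ℝ (Fin N))).IsAddLeftInvariant :=
    inferInstanceAs (((volume : Measure ℝ).prod volume).IsAddLeftInvariant)
  apply Measure.regular_of_isAddLeftInvariant
    (K := closedBall (0 : ℝ × EuclideanSpace ℝ (Fin N)) 1)
  · exact isCompact_closedBall 0 1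
  · refine ⟨0, ?_⟩
    have h : ball (0 : ℝ × EuclideanSpace ℝ (Fin N)) 1 ⊆ interior (closedBall 0 1) :=
      interior_maximal ball_subset_closedBall isOpen_ball
    exact h (mem_ball_self one_pos)
  · exact ((isCompact_closedBall (0 : ℝ × EuclideanSpace ℝ (Fin N)) 1).measure_lt_top).ne

-- a coordinate hyperplane in ℝ^N is volume-null
lemma aux_hyperplane_null {N : ℕ} (i : Fin N) :
    volume {x : EuclideanSpace ℝ (Fin N) | x i = 0} = 0 := by
  have hequiv := EuclideanSpace.volume_preserving_symm_measurableEquiv_toLp (Fin N)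
  have hset : {x : EuclideanSpace ℝ (Fin N) | x i = 0} =
      (MeasurableEquiv.toLp 2 (Fin N → ℝ)).symm ⁻¹' {f : Fin N → ℝ | f i = 0} := rfl
  rw [hset]
  have hmeas : MeasurableSet {f : Fin N → ℝ | f i = 0} :=
    measurableSet_eq_fun (measurable_pi_apply i) measurable_const
  rw [hequiv.measure_preimage hmeas.nullMeasurableSet]
  have : {f : Fin N → ℝ | f i = 0} =
      Set.pi Set.univ (fun j => if j = i then ({0} : Set ℝ) else Set.univ) := by
    ext f
    simp only [Set.mem_setOf_eq, Set.mem_pi, Set.mem_univ, forall_true_left]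
    constructor
    · intro h j
      by_cases hj : j = i
      · subst hj; simp [h]
      · simp [hj]
    · intro h
      have := h i
      simpa using this
  rw [this, volume_pi_pi]
  refine Finset.prod_eq_zero (Finset.mem_univ i) ?_
  simp

-- points of the cube have norm at most √N
lemma aux_cube_norm {N : ℕ} {x : EuclideanSpace ℝ (Fin N)}
    (hx : ∀ i, x i ∈ Set.Ico (0:ℝ) 1) : ‖x‖ ≤ Real.sqrt N := by
  rw [EuclideanSpace.norm_eq]
  refine Real.sqrt_le_sqrt ?_
  calc ∑ j, ‖x j‖ ^ 2 ≤ ∑ _j : Fin N, 1 := by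
        refine Finset.sum_le_sum fun j _ => ?_
        have h1 := (hx j).1
        have h2 := (hx j).2
        rw [Real.norm_eq_abs, abs_of_nonneg h1]
        nlinarith
    _ = N := by simp

-- the cube is bounded
lemma aux_cube_bounded {N : ℕ} :
    Bornology.IsBounded {x : EuclideanSpace ℝ (Fin N) | ∀ i, x i ∈ Set.Ico (0:ℝ) 1} := by
  refine (isBounded_closedBall (x := (0 : EuclideanSpace ℝ (Fin N))) (r := Real.sqrt N)).subset ?_
  intro x hx
  rw [mem_closedBall_zero_iff]
  exact aux_cube_norm hx

lemma exists_test {N : ℕ} {T : ℝ} (hT : 0 < T)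
    {cube : Set (EuclideanSpace ℝ (Fin N))}
    (hcube : cube = {x : EuclideanSpace ℝ (Fin N) | ∀ i, x i ∈ Set.Ico (0:ℝ) 1})
    {g : ℝ × EuclideanSpace ℝ (Fin N) → ℝ}
    (hg : IntegrableOn g (Set.Ioo 0 T ×ˢ cube))
    (hbad : volume.restrict (Set.Ioo 0 T ×ˢ cube) {q | 0 < g q} ≠ 0) :
    ∃ Φ : ℝ × EuclideanSpace ℝ (Fin N) → ℝ,
      Continuous Φ ∧ (∀ q, 0 ≤ Φ q) ∧
      (∀ (t : ℝ) (x : EuclideanSpace ℝ (Fin N)) (i : Fin N),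
        Φ (t, x + EuclideanSpace.single i (1:ℝ)) = Φ (t, x)) ∧
      0 < ∫ q in Set.Ioo 0 T ×ˢ cube, Φ q * g q := by
  classical
  set box : Set (ℝ × EuclideanSpace ℝ (Fin N)) := Set.Ioo 0 T ×ˢ cube with hbox
  set μ : Measure (ℝ × EuclideanSpace ℝ (Fin N)) := volume.restrict box with hμ
  haveI hreg : (volume : Measure (ℝ × EuclideanSpace ℝ (Fin N))).Regular := aux_regular
  -- cube is measurable
  have hcubem : MeasurableSet cube := by
    rw [hcube]
    have : {x : EuclideanSpace ℝ (Fin N) | ∀ i, x i ∈ Set.Ico (0:ℝ) 1}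
        = ⋂ i, {x : EuclideanSpace ℝ (Fin N) | x i ∈ Set.Ico (0:ℝ) 1} := by
      ext x; simp
    rw [this]
    exact MeasurableSet.iInter fun i =>
      (measurableSet_Ico.preimage (by exact (PiLp.continuous_apply 2 _ i).measurable))
  have hboxm : MeasurableSet box := measurableSet_Ioo.prod hcubem
  -- box is bounded, hence of finite volume
  have hboxb : Bornology.IsBounded box := by
    rw [hbox]
    exact (isBounded_Ioo 0 T).prod (hcube ▸ aux_cube_bounded)
  have hboxfin : volume box < ⊤ := hboxb.measure_lt_top
  haveI : IsFiniteMeasure μ := by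
    constructor
    rw [hμ, Measure.restrict_apply_univ]
    exact hboxfin
  -- measurable representative of g
  have hgint : Integrable g μ := hg
  have hgm : AEStronglyMeasurable g μ := hgint.aestronglyMeasurable
  set g' : ℝ × EuclideanSpace ℝ (Fin N) → ℝ := hgm.mk g with hg'def
  have hg'sm : StronglyMeasurable g' := hgm.stronglyMeasurable_mk
  have hgg' : g =ᵐ[μ] g' := hgm.ae_eq_mk
  have hg'int : Integrable g' μ := hgint.congr hgg'
  have hbad' : μ {q | 0 < g' q} ≠ 0 := by
    have hset : {q | 0 < g q} =ᵐ[μ] {q | 0 < g' q} := by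
      filter_upwards [hgg'] with q hq
      show (0 < g q) = (0 < g' q)
      rw [hq]
    rw [← measure_congr hset]
    exact hbad
  -- superlevel set of positive measure
  obtain ⟨n, hSn⟩ : ∃ n : ℕ, μ {q | 1/(n+1 : ℝ) ≤ g' q} ≠ 0 := by
    by_contra h
    push_neg at h
    apply hbad'
    have hsub : {q | 0 < g' q} ⊆ ⋃ n : ℕ, {q | 1/(n+1 : ℝ) ≤ g' q} := by
      intro q hq
      obtain ⟨n, hn⟩ := exists_nat_one_div_lt (show (0:ℝ) < g' q from hq)
      exact Set.mem_iUnion.2 ⟨n, le_of_lt hn⟩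
    exact measure_mono_null hsub (measure_iUnion_null h)
  set ε : ℝ := 1/(n+1 : ℝ) with hε
  have hεpos : 0 < ε := by positivity
  -- the open box
  set V : Set (ℝ × EuclideanSpace ℝ (Fin N)) :=
    Set.Ioo 0 T ×ˢ {x : EuclideanSpace ℝ (Fin N) | ∀ i, x i ∈ Set.Ioo (0:ℝ) 1} with hV
  have hVopen : IsOpen V := by
    refine isOpen_Ioo.prod ?_
    have : {x : EuclideanSpace ℝ (Fin N) | ∀ i, x i ∈ Set.Ioo (0:ℝ) 1}
        = ⋂ i, {x : EuclideanSpace ℝ (Fin N) | x i ∈ Set.Ioo (0:ℝ) 1} := by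
      ext x; simp
    rw [this]
    exact isOpen_iInter_of_finite fun i => isOpen_Ioo.preimage (by exact PiLp.continuous_apply 2 _ i)
  have hVcnull : μ Vᶜ = 0 := by
    rw [hμ, Measure.restrict_apply (hVopen.measurableSet.compl)]
    have hsub : Vᶜ ∩ box ⊆ ⋃ i : Fin N, {q : ℝ × EuclideanSpace ℝ (Fin N) | q.2 i = 0} := by
      rintro ⟨t, x⟩ ⟨hqc, hqb⟩
      have hx : x ∈ cube := hqb.2
      rw [hcube] at hx
      have ht : t ∈ Set.Ioo 0 T := hqb.1
      rw [hV] at hqc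
      simp only [Set.mem_compl_iff, Set.mem_prod, not_and] at hqc
      have := hqc ht
      simp only [Set.mem_setOf_eq, not_forall] at this
      obtain ⟨i, hi⟩ := this
      refine Set.mem_iUnion.2 ⟨i, ?_⟩
      have h1 := (hx i).1
      have h2 := (hx i).2
      simp only [Set.mem_Ioo, not_and, not_lt] at hi
      rcases lt_or_eq_of_le h1 with h | h
      · exact absurd (hi h) (by linarith)
      · exact h.symm
    refine measure_mono_null hsub (measure_iUnion_null fun i => ?_)
    have : {q : ℝ × EuclideanSpace ℝ (Fin N) | q.2 i = 0}
        = (Set.univ : Set ℝ) ×ˢ {x : EuclideanSpace ℝ (Fin N) | x i = 0} := by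
      ext ⟨t, x⟩; simp
    rw [this]
    have hprod : (volume : Measure (ℝ × EuclideanSpace ℝ (Fin N)))
        = (volume : Measure ℝ).prod (volume : Measure (EuclideanSpace ℝ (Fin N))) := rfl
    rw [hprod, Measure.prod_prod, aux_hyperplane_null i, mul_zero]
  -- the positive-measure set inside the open box
  set E₀ : Set (ℝ × EuclideanSpace ℝ (Fin N)) := {q | ε ≤ g' q} ∩ V with hE₀
  have hE₀meas : MeasurableSet E₀ :=
    (hg'sm.measurable measurableSet_Ici).inter hVopen.measurableSet
  have hE₀pos : μ E₀ ≠ 0 := by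
    intro h0
    apply hSn
    have hsub : {q | 1/(n+1 : ℝ) ≤ g' q} ⊆ E₀ ∪ Vᶜ := by
      intro q hq
      by_cases hqV : q ∈ V
      · exact Or.inl ⟨hq, hqV⟩
      · exact Or.inr hqV
    refine le_antisymm ?_ (zero_le ..)
    calc μ {q | 1/(n+1 : ℝ) ≤ g' q} ≤ μ (E₀ ∪ Vᶜ) := measure_mono hsub
      _ ≤ μ E₀ + μ Vᶜ := measure_union_le _ _
      _ = 0 := by rw [h0, hVcnull, add_zero]
  have hE₀fin : μ E₀ ≠ ⊤ := measure_ne_top μ E₀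
  -- a compact subset of positive measure
  obtain ⟨K, hKE₀, hKcomp, hKlt⟩ :=
    MeasurableSet.exists_isCompact_lt_add hE₀meas hE₀fin (ε := μ E₀) hE₀pos
  have hKpos : μ K ≠ 0 := by
    intro h0
    rw [h0, zero_add] at hKlt
    exact absurd hKlt (lt_irrefl _)
  have hKfin : μ K ≠ ⊤ := measure_ne_top μ K
  set κ : ℝ := (μ K).toReal with hκ
  have hκpos : 0 < κ := ENNReal.toReal_pos hKpos hKfin
  -- absolute continuity of the integral of ‖g'‖
  have hfinint : ∫⁻ q, (‖g' q‖₊ : ENNReal) ∂μ ≠ ⊤ := hg'int.2.ne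
  obtain ⟨δ, hδpos, hδ⟩ := exists_pos_setLIntegral_lt_of_measure_lt hfinint
    (ε := ENNReal.ofReal (ε * κ / 2)) (by
      simp only [ne_eq, ENNReal.ofReal_eq_zero, not_le]
      positivity)
  -- an open set U ⊇ K with small excess volume
  obtain ⟨U, hKU, hUopen, _, hUK⟩ :=
    MeasurableSet.exists_isOpen_diff_lt (μ := (volume : Measure (ℝ × EuclideanSpace ℝ (Fin N))))
      hKcomp.measurableSet (hKcomp.measure_lt_top (μ := volume)).ne (ε := δ) hδpos.ne'
  -- shrink: K ⊆ U₁ ⊆ closure U₁ ⊆ U ∩ V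
  have hKV : K ⊆ V := fun q hq => (hKE₀ hq).2
  have hKUV : K ⊆ U ∩ V := fun q hq => ⟨hKU hq, hKV hq⟩
  obtain ⟨U₁, hU₁open, hKU₁, hclU₁⟩ :=
    normal_exists_closure_subset hKcomp.isClosed (hUopen.inter hVopen) hKUV
  -- closure U₁ is compact (bounded, closed)
  have hU₁bdd : Bornology.IsBounded U₁ := by
    refine (Bornology.IsBounded.subset ?_ (hclU₁.trans (Set.inter_subset_right)))|>.subset subset_closure
    rw [hV]
    exact ((isBounded_Ioo 0 T).prod (hcube ▸ aux_cube_bounded)).subset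
      (Set.prod_mono (subset_refl _) (fun x hx => by
        rw [hcube]; exact fun i => ⟨(hx i).1.le, (hx i).2⟩))
  have hclcomp : IsCompact (closure U₁) :=
    Metric.isCompact_of_isClosed_isBounded isClosed_closure hU₁bdd.closure
  -- margin ρ
  obtain ⟨ρ₀, hρ₀pos, hρ₀⟩ :=
    hclcomp.exists_thickening_subset_open hVopen (hclU₁.trans Set.inter_subset_right)
  set ρ : ℝ := min ρ₀ (1/2) with hρdef
  have hρpos : 0 < ρ := lt_min hρ₀pos (by norm_num)
  have hρ1 : ρ < 1 := lt_of_le_of_lt (min_le_right _ _) (by norm_num)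
  have hthick : thickening ρ (closure U₁) ⊆ V :=
    (thickening_mono (min_le_left _ _) _).trans hρ₀
  -- Urysohn function
  have hdisj : Disjoint K U₁ᶜ := Set.disjoint_left.2 fun q hq hqc => hqc (hKU₁ hq)
  obtain ⟨f, hf0, hf1, hf01⟩ :=
    exists_continuous_zero_one_of_isCompact hKcomp (isClosed_compl_iff.2 hU₁open) hdisj
  set φ : ℝ × EuclideanSpace ℝ (Fin N) → ℝ := fun q => 1 - f q with hφdef
  have hφcont : Continuous φ := continuous_const.sub f.continuous
  have hφ01 : ∀ q, 0 ≤ φ q ∧ φ q ≤ 1 := fun q => by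
    have := hf01 q
    constructor <;> simp only [hφdef] <;> [linarith [this.2]; linarith [this.1]]
  have hφK : ∀ q ∈ K, φ q = 1 := fun q hq => by
    simp only [hφdef]
    rw [hf0 hq]
    simp
  have hφ0 : ∀ q ∉ U₁, φ q = 0 := fun q hq => by
    simp only [hφdef]
    rw [hf1 hq]
    simp
  -- vanishing near the coordinate boundary
  have hvan : ∀ (t : ℝ) (y : EuclideanSpace ℝ (Fin N)),
      (∃ i, y i ≤ ρ/2 ∨ 1 - ρ/2 ≤ y i) → φ (t, y) = 0 := by
    rintro t y ⟨i, hi⟩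
    by_contra hphi
    have hU₁mem : (t, y) ∈ U₁ := by
      by_contra h
      exact hphi (hφ0 _ h)
    have hCV : (t, y) ∈ V := (hclU₁.trans Set.inter_subset_right) (subset_closure hU₁mem)
    have hyi : y i ∈ Set.Ioo (0:ℝ) 1 := hCV.2 i
    set z : ℝ := if y i ≤ ρ/2 then 0 else 1 with hz
    set y' : EuclideanSpace ℝ (Fin N) := y + EuclideanSpace.single i (z - y i) with hy'
    have hdist : dist (t, y') ((t, y) : ℝ × EuclideanSpace ℝ (Fin N)) < ρ := by
      rw [Prod.dist_eq]
      have h1 : dist t t = 0 := dist_self t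
      have h2 : dist y' y = |z - y i| := by
        rw [dist_eq_norm, hy']
        have : y + EuclideanSpace.single i (z - y i) - y = EuclideanSpace.single i (z - y i) := by
          abel
        rw [this, EuclideanSpace.norm_single, Real.norm_eq_abs]
      rw [h1, h2]
      have habs : |z - y i| ≤ ρ/2 := by
        rw [hz]
        split_ifs with h
        · rw [abs_of_nonpos (by linarith [hyi.1])]
          linarith [hyi.1]
        · push_neg at h
          rcases hi with hi | hi
          · linarith
          · rw [abs_of_nonneg (by linarith [hyi.2])]
            linarith [hyi.2]
      have : max (0:ℝ) |z - y i| = |z - y i| := max_eq_right (abs_nonneg _)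
      rw [this]
      linarith
    have hy'V : (t, y') ∈ V := by
      apply hthick
      exact mem_thickening_iff.2 ⟨(t, y), subset_closure hU₁mem, hdist⟩
    have : y' i ∈ Set.Ioo (0:ℝ) 1 := hy'V.2 i
    have hy'i : y' i = z := by
      rw [hy']
      have : (y + EuclideanSpace.single i (z - y i)) i = y i + (z - y i) := by
        rw [PiLp.add_apply, EuclideanSpace.single_apply]
        simp
      rw [this]; ring
    rw [hy'i] at this
    rw [hz] at this
    split_ifs at this with h
    · exact absurd this.1 (lt_irrefl 0)
    · exact absurd this.2 (lt_irrefl 1)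
  -- the periodized test function
  set Φ : ℝ × EuclideanSpace ℝ (Fin N) → ℝ :=
    fun q => φ (q.1, (WithLp.toLp 2 (fun i => Int.fract (q.2 i)) : EuclideanSpace ℝ (Fin N))) with hΦdef
  have hΦcont : Continuous Φ := continuous_periodize hφcont hρpos hρ1 hvan
  have hΦnonneg : ∀ q, 0 ≤ Φ q := fun q => (hφ01 _).1
  have hΦper : ∀ (t : ℝ) (x : EuclideanSpace ℝ (Fin N)) (i : Fin N),
      Φ (t, x + EuclideanSpace.single i (1:ℝ)) = Φ (t, x) := by
    intro t x i
    simp only [hΦdef]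
    congr 1
    refine Prod.ext rfl ?_
    ext j
    show Int.fract ((x + EuclideanSpace.single i (1:ℝ)) j) = Int.fract (x j)
    rw [PiLp.add_apply, EuclideanSpace.single_apply]
    by_cases hj : j = i
    · subst hj
      rw [if_pos rfl]
      have h1 : x j + (1:ℝ) = x j + ((1:ℤ) : ℝ) := by norm_num
      rw [h1, Int.fract_add_intCast]
    · simp [hj]
  -- on the box, Φ = φ
  have hΦbox : ∀ q ∈ box, Φ q = φ q := by
    rintro ⟨t, x⟩ hq
    have hx : x ∈ cube := hq.2
    rw [hcube] at hx
    simp only [hΦdef]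
    congr 1
    refine Prod.ext rfl ?_
    ext j
    show Int.fract (x j) = x j
    exact Int.fract_eq_self.2 ⟨(hx j).1, (hx j).2⟩
  refine ⟨Φ, hΦcont, hΦnonneg, hΦper, ?_⟩
  -- integrability of φ * g'
  have hφg'int : Integrable (fun q => φ q * g' q) μ :=
    hg'int.bdd_mul (c := 1) hφcont.aestronglyMeasurable
      (Filter.Eventually.of_forall fun q => by
        rw [Real.norm_eq_abs, abs_of_nonneg (hφ01 q).1]
        exact (hφ01 q).2)
  -- the integral over the box
  have hstep1 : ∫ q in box, Φ q * g q = ∫ q, φ q * g q ∂μ := by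
    rw [hμ]
    exact setIntegral_congr_fun hboxm fun q hq => by rw [hΦbox q hq]
  have hstep2 : ∫ q, φ q * g q ∂μ = ∫ q, φ q * g' q ∂μ := by
    refine integral_congr_ae ?_
    filter_upwards [hgg'] with q hq
    rw [hq]
  have hsplit : ∫ q in K, φ q * g' q ∂μ + ∫ q in Kᶜ, φ q * g' q ∂μ = ∫ q, φ q * g' q ∂μ :=
    integral_add_compl hKcomp.measurableSet hφg'int
  have hKpart : ε * κ ≤ ∫ q in K, φ q * g' q ∂μ := by
    have h1 : ∫ q in K, φ q * g' q ∂μ = ∫ q in K, g' q ∂μ :=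
      setIntegral_congr_fun hKcomp.measurableSet fun q hq => by rw [hφK q hq, one_mul]
    rw [h1, hκ]
    exact setIntegral_ge_of_const_le_real hKcomp.measurableSet hKfin
      (fun q hq => (hKE₀ hq).1) hg'int.integrableOn
  have hKcpart : -(ε * κ / 2) ≤ ∫ q in Kᶜ, φ q * g' q ∂μ := by
    have hb1 : ‖∫ q in Kᶜ, φ q * g' q ∂μ‖ ≤
        (∫⁻ q in Kᶜ, ENNReal.ofReal ‖φ q * g' q‖ ∂μ).toReal :=
      norm_integral_le_lintegral_norm _
    have hptwise : ∀ q, ENNReal.ofReal ‖φ q * g' q‖ ≤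
        Set.indicator U₁ (fun q => (‖g' q‖₊ : ENNReal)) q := by
      intro q
      by_cases hq : q ∈ U₁
      · rw [Set.indicator_of_mem hq]
        rw [← ENNReal.ofReal_coe_nnreal, coe_nnnorm]
        apply ENNReal.ofReal_le_ofReal
        rw [Real.norm_eq_abs, Real.norm_eq_abs, abs_mul]
        have := abs_nonneg (g' q)
        have h2 : |φ q| ≤ 1 := by
          rw [abs_of_nonneg (hφ01 q).1]; exact (hφ01 q).2
        nlinarith
      · rw [Set.indicator_of_notMem hq, hφ0 q hq]
        simp
    have hb2 : (∫⁻ q in Kᶜ, ENNReal.ofReal ‖φ q * g' q‖ ∂μ) ≤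
        ∫⁻ q in U₁ ∩ Kᶜ, (‖g' q‖₊ : ENNReal) ∂μ := by
      calc (∫⁻ q in Kᶜ, ENNReal.ofReal ‖φ q * g' q‖ ∂μ)
          ≤ ∫⁻ q in Kᶜ, Set.indicator U₁ (fun q => (‖g' q‖₊ : ENNReal)) q ∂μ :=
            lintegral_mono hptwise
        _ = ∫⁻ q in U₁, (‖g' q‖₊ : ENNReal) ∂(μ.restrict Kᶜ) :=
            lintegral_indicator hU₁open.measurableSet _
        _ = ∫⁻ q in U₁ ∩ Kᶜ, (‖g' q‖₊ : ENNReal) ∂μ := by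
            rw [Measure.restrict_restrict hU₁open.measurableSet]
    have hsmall : μ (U₁ ∩ Kᶜ) < δ := by
      have hsub : U₁ ∩ Kᶜ ⊆ U \ K := by
        rintro q ⟨h1, h2⟩
        exact ⟨(Set.inter_subset_left) (hclU₁ (subset_closure h1)), h2⟩
      calc μ (U₁ ∩ Kᶜ) ≤ volume (U₁ ∩ Kᶜ) := by
            rw [hμ, Measure.restrict_apply ((hU₁open.measurableSet).inter
              hKcomp.measurableSet.compl)]
            exact measure_mono Set.inter_subset_left
        _ ≤ volume (U \ K) := measure_mono hsub
        _ < δ := hUK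
    have hb3 := hδ _ hsmall
    have hb4 : (∫⁻ q in Kᶜ, ENNReal.ofReal ‖φ q * g' q‖ ∂μ).toReal ≤ ε * κ / 2 := by
      have hle : (∫⁻ q in Kᶜ, ENNReal.ofReal ‖φ q * g' q‖ ∂μ) ≤
          ENNReal.ofReal (ε * κ / 2) := (hb2.trans_lt hb3).le
      calc (∫⁻ q in Kᶜ, ENNReal.ofReal ‖φ q * g' q‖ ∂μ).toReal
          ≤ (ENNReal.ofReal (ε * κ / 2)).toReal :=
            ENNReal.toReal_mono ENNReal.ofReal_ne_top hle
        _ = ε * κ / 2 := ENNReal.toReal_ofReal (by positivity)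
    have := (abs_le.1 ((Real.norm_eq_abs _ ▸ hb1).trans hb4)).1
    linarith
  rw [hstep1, hstep2, ← hsplit]
  have hpos : 0 < ε * κ := mul_pos hεpos hκpos
  linarith


/-- Computation of the conjugate `G*`: with
`Σ = sup_b ∫₀^T∫_{T^N} (−b·w − H(x,b) m)` over continuous vector fields `b` on `[0,T]×T^N`,
one has `Σ = 0` if `m ≥ 0` a.e. and `w(t,x) ∈ m(t,x)c(x,A)` a.e., and `Σ = +∞` (the family is
unbounded above) otherwise. -/
theorem conjugate_of_continuity_constraint {N : ℕ} (hN : 1 ≤ N)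
    {A : Type*} [TopologicalSpace A] [CompactSpace A] [Nonempty A]
    (c : EuclideanSpace ℝ (Fin N) → A → EuclideanSpace ℝ (Fin N))
    (hc : Continuous fun q : EuclideanSpace ℝ (Fin N) × A => c q.1 q.2)
    (Lc : NNReal) (hcLip : ∀ a : A, LipschitzWith Lc (fun x => c x a))
    (hconv : ∀ x, Convex ℝ (Set.range (c x)))
    (c₀ : ℝ) (hc₀ : 0 < c₀)
    (hball : ∀ x, closedBall (0 : EuclideanSpace ℝ (Fin N)) c₀ ⊆ Set.range (c x))
    (hcper : ∀ (a : A) (x : EuclideanSpace ℝ (Fin N)) (i : Fin N),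
      c (x + EuclideanSpace.single i (1:ℝ)) a = c x a)
    (H : EuclideanSpace ℝ (Fin N) → EuclideanSpace ℝ (Fin N) → ℝ)
    (hH : ∀ x p, H x p = ⨆ a : A, -⟪c x a, p⟫)
    (T : ℝ) (hT : 0 < T)
    -- the unit cube, a fundamental domain for the torus `T^N`
    (cube : Set (EuclideanSpace ℝ (Fin N)))
    (hcube : cube = {x : EuclideanSpace ℝ (Fin N) | ∀ i, x i ∈ Set.Ico (0:ℝ) 1})
    -- `m ∈ L¹((0,T)×T^N)` and `w ∈ L¹((0,T)×T^N;ℝ^N)`, as `ℤ^N`-periodic functions in `x`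
    (m : ℝ × EuclideanSpace ℝ (Fin N) → ℝ)
    (w : ℝ × EuclideanSpace ℝ (Fin N) → EuclideanSpace ℝ (Fin N))
    (hm1 : IntegrableOn m (Set.Ioo 0 T ×ˢ cube))
    (hw1 : IntegrableOn w (Set.Ioo 0 T ×ˢ cube))
    (hmper : ∀ t x (i : Fin N), m (t, x + EuclideanSpace.single i (1:ℝ)) = m (t, x))
    (hwper : ∀ t x (i : Fin N), w (t, x + EuclideanSpace.single i (1:ℝ)) = w (t, x))
    -- the set of values `∫₀^T∫_{T^N} (−b·w − H(x,b)m)` over continuous `b : [0,T]×T^N → ℝ^N`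
    (S : Set ℝ)
    (hS : S = {r : ℝ | ∃ b : ℝ × EuclideanSpace ℝ (Fin N) → EuclideanSpace ℝ (Fin N),
      Continuous b ∧
      (∀ t x (i : Fin N), b (t, x + EuclideanSpace.single i (1:ℝ)) = b (t, x)) ∧
      r = ∫ q in Set.Ioo 0 T ×ˢ cube, (-⟪b q, w q⟫ - H q.2 (b q) * m q)})
    -- the admissibility condition: `m ≥ 0` a.e. and `w(t,x) ∈ m(t,x)c(x,A)` a.e.
    (P : Prop)
    (hP : P ↔ ((∀ᵐ q ∂(volume.restrict (Set.Ioo 0 T ×ˢ cube)), 0 ≤ m q) ∧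
      (∀ᵐ q ∂(volume.restrict (Set.Ioo 0 T ×ˢ cube)), ∃ a : A, w q = m q • c q.2 a))) :
    (P → sSup S = 0) ∧ (¬ P → ¬ BddAbove S) := by
  set box : Set (ℝ × EuclideanSpace ℝ (Fin N)) := Set.Ioo 0 T ×ˢ cube with hboxdef
  -- `0 ∈ S` (take `b = 0`)
  have hzero : (0:ℝ) ∈ S := by
    rw [hS]
    refine ⟨fun _ => 0, continuous_const, fun _ _ _ => rfl, ?_⟩
    have hpt : ∀ q : ℝ × EuclideanSpace ℝ (Fin N),
        -⟪(0 : EuclideanSpace ℝ (Fin N)), w q⟫ - H q.2 0 * m q = 0 := by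
      intro q
      rw [inner_zero_left, hH, aux_H0]
      ring
    simp only [hpt]
    rw [integral_zero]
  constructor
  · -- Part 1
    intro hPP
    obtain ⟨hm0, hmw⟩ := hP.1 hPP
    have hub : ∀ r ∈ S, r ≤ 0 := by
      rw [hS]
      rintro r ⟨b, hbc, hbper, rfl⟩
      refine integral_nonpos_of_ae ?_
      filter_upwards [hm0, hmw] with q hq1 hq2
      obtain ⟨a, ha⟩ := hq2
      have h1 : -⟪c q.2 a, b q⟫ ≤ H q.2 (b q) := by
        rw [hH]; exact aux_le hc q.2 (b q) a
      have h2 : -⟪c q.2 a, b q⟫ * m q ≤ H q.2 (b q) * m q :=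
        mul_le_mul_of_nonneg_right h1 hq1
      have h3 : ⟪b q, w q⟫ = m q * ⟪b q, c q.2 a⟫ := by
        rw [ha, real_inner_smul_right]
      have h4 : ⟪b q, c q.2 a⟫ = ⟪c q.2 a, b q⟫ := real_inner_comm _ _
      show -⟪b q, w q⟫ - H q.2 (b q) * m q ≤ 0
      rw [h3, h4]
      nlinarith [h2]
    exact le_antisymm (csSup_le ⟨0, hzero⟩ hub) (le_csSup ⟨0, hub⟩ hzero)
  · -- Part 2
    intro hPn hBdd
    obtain ⟨C, hC⟩ := hBdd
    set μ : Measure (ℝ × EuclideanSpace ℝ (Fin N)) := volume.restrict box with hμdef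
    -- Step 1: boundedness forces the family of linear inequalities a.e.
    have claim1 : ∀ p : EuclideanSpace ℝ (Fin N),
        ∀ᵐ q ∂μ, 0 ≤ ⟪p, w q⟫ + H q.2 p * m q := by
      intro p
      by_contra hcon
      set g : ℝ × EuclideanSpace ℝ (Fin N) → ℝ :=
        fun q => -⟪p, w q⟫ - H q.2 p * m q with hgdef
      have hbad : μ {q | 0 < g q} ≠ 0 := by
        intro h0
        apply hcon
        rw [ae_iff]
        convert h0 using 2
        ext q
        simp only [Set.mem_setOf_eq, not_le, hgdef]
        constructor
        · intro h; linarith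
        · intro h; linarith
      -- integrability of g
      have hHcont : Continuous fun q : ℝ × EuclideanSpace ℝ (Fin N) => H q.2 p := by
        have he : (fun q : ℝ × EuclideanSpace ℝ (Fin N) => H q.2 p)
            = fun q : ℝ × EuclideanSpace ℝ (Fin N) => ⨆ a : A, -⟪c q.2 a, p⟫ :=
          funext fun q => hH _ _
        rw [he]
        exact (aux_contHx hc hcLip p).comp continuous_snd
      have hHbdd : ∀ᵐ q ∂μ, ‖H q.2 p‖ ≤ |H 0 p| + Lc * Real.sqrt N * ‖p‖ := by
        have hboxm : MeasurableSet box := by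
          refine measurableSet_Ioo.prod ?_
          rw [hcube]
          have : {x : EuclideanSpace ℝ (Fin N) | ∀ i, x i ∈ Set.Ico (0:ℝ) 1}
              = ⋂ i, {x : EuclideanSpace ℝ (Fin N) | x i ∈ Set.Ico (0:ℝ) 1} := by
            ext x; simp
          rw [this]
          exact MeasurableSet.iInter fun i =>
            (measurableSet_Ico.preimage (by exact (PiLp.continuous_apply 2 _ i).measurable))
        rw [hμdef, ae_restrict_iff' hboxm]
        refine Filter.Eventually.of_forall fun q hq => ?_
        have hxn : dist q.2 (0 : EuclideanSpace ℝ (Fin N)) ≤ Real.sqrt N := by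
          rw [dist_zero_right]
          have hx2 : q.2 ∈ {x : EuclideanSpace ℝ (Fin N) | ∀ i, x i ∈ Set.Ico (0:ℝ) 1} := by
            rw [← hcube]; exact hq.2
          exact aux_cube_norm hx2
        have h1 := aux_lipx hc hcLip p q.2 (0 : EuclideanSpace ℝ (Fin N))
        have h2 := aux_lipx hc hcLip p (0 : EuclideanSpace ℝ (Fin N)) q.2
        rw [dist_comm] at h2
        rw [← hH, ← hH] at h1 h2
        rw [Real.norm_eq_abs, abs_le]
        have hLcn : (0:ℝ) ≤ Lc := Lc.2
        have hpn : (0:ℝ) ≤ ‖p‖ := norm_nonneg p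
        have hmul : Lc * dist q.2 (0 : EuclideanSpace ℝ (Fin N)) * ‖p‖
            ≤ Lc * Real.sqrt N * ‖p‖ := by
          have := mul_le_mul_of_nonneg_left hxn hLcn
          exact mul_le_mul_of_nonneg_right this hpn
        constructor
        · have := abs_nonneg (H 0 p)
          have h5 : -(|H 0 p|) ≤ H 0 p := neg_abs_le _
          linarith
        · have h5 : H 0 p ≤ |H 0 p| := le_abs_self _
          linarith
      have hgint : IntegrableOn g box := by
        have t1 : Integrable (fun q => ⟪p, w q⟫) μ := by
          have := ContinuousLinearMap.integrable_comp (innerSL ℝ p) hw1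
          exact this
        have t2 : Integrable (fun q => H q.2 p * m q) μ :=
          hm1.bdd_mul hHcont.aestronglyMeasurable hHbdd
        exact (t1.neg.sub t2)
      obtain ⟨Φ, hΦc, hΦnn, hΦper, hΦpos⟩ := exists_test hT hcube hgint hbad
      set r₀ : ℝ := ∫ q in box, Φ q * g q with hr₀
      -- the scaled vector fields give arbitrarily large elements of S
      obtain ⟨k, hk⟩ := exists_nat_gt (C / r₀)
      have hkr : C < k * r₀ := by
        rw [div_lt_iff₀ hΦpos] at hk
        linarith
      have hmem : (k : ℝ) * r₀ ∈ S := by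
        rw [hS]
        refine ⟨fun q => ((k:ℝ) * Φ q) • p, (continuous_const.mul hΦc).smul continuous_const,
          fun t x i => by simp only [hΦper t x i], ?_⟩
        have hpt : ∀ q : ℝ × EuclideanSpace ℝ (Fin N),
            -⟪((k:ℝ) * Φ q) • p, w q⟫ - H q.2 (((k:ℝ) * Φ q) • p) * m q
              = (k:ℝ) * (Φ q * g q) := by
          intro q
          have hs : (0:ℝ) ≤ (k:ℝ) * Φ q := mul_nonneg (Nat.cast_nonneg k) (hΦnn q)
          rw [real_inner_smul_left, hH, aux_hom _ _ hs, ← hH, hgdef]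
          ring
        simp only [hpt]
        rw [integral_const_mul]
      have := hC hmem
      linarith
    -- Step 2: deduce `P`, contradiction
    apply hPn
    obtain ⟨D, hDc, hDd⟩ :=
      TopologicalSpace.exists_countable_dense (EuclideanSpace ℝ (Fin N))
    have h1 : ∀ᵐ q ∂μ, ∀ p ∈ D, 0 ≤ ⟪p, w q⟫ + H q.2 p * m q :=
      (ae_ball_iff hDc).2 fun p _ => claim1 p
    have h2 : ∀ᵐ q ∂μ, ∀ p, 0 ≤ ⟪p, w q⟫ + H q.2 p * m q := by
      filter_upwards [h1] with q hq
      intro p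
      have hcl : IsClosed {p : EuclideanSpace ℝ (Fin N) | 0 ≤ ⟪p, w q⟫ + H q.2 p * m q} := by
        refine isClosed_le continuous_const (Continuous.add ?_ ?_)
        · exact continuous_id.inner continuous_const
        · have he : (fun p : EuclideanSpace ℝ (Fin N) => H q.2 p * m q)
              = fun p : EuclideanSpace ℝ (Fin N) => (⨆ a : A, -⟪c q.2 a, p⟫) * m q := by
            funext p; rw [hH]
          rw [he]
          exact (aux_lipp hc q.2).mul continuous_const
      have hsub : D ⊆ {p : EuclideanSpace ℝ (Fin N) | 0 ≤ ⟪p, w q⟫ + H q.2 p * m q} :=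
        fun p hp => hq p hp
      have := closure_mono hsub
      rw [hcl.closure_eq] at this
      exact this (hDd p)
    have h3 : ∀ᵐ q ∂μ, 0 ≤ m q ∧ ∃ a : A, w q = m q • c q.2 a := by
      filter_upwards [h2] with q hq
      refine aux_good hN hc hconv hc₀ hball q.2 (m q) (w q) fun p => ?_
      rw [← hH]
      exact hq p
    exact hP.2 ⟨h3.mono fun q hq => hq.1, h3.mono fun q hq => hq.2⟩
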